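/- Fix π ∈ (0,1/2], δ ∈ (0,π), and λ* = log((1−π)/δ) / (log((1−π)/δ) + log(π/δ)). Then for all (p,q) ∈ [0,1]² with e_π(Ber(p),Ber(q)) = δ, the Bernoulli Hellinger affinity satisfies β_{λ*}(p,q) ≤ 2 (δ/π)^{λ*}. -/

import Mathlib

open Real

/-- The optimal exponent λ* of the one-shot Bayes error lower bound. -/
noncomputable def lambdaStar (pr δ : ℝ) : ℝ :=
  Real.log ((1 - pr) / δ) / (Real.log ((1 - pr) / δ) + Real.log (pr / δ))

/-- Bayes error for a pair of Bernoulli distributions Ber(p), Ber(q) with prior pr. -/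
noncomputable def bayesErrB (pr p q : ℝ) : ℝ :=
  min (pr * p) ((1 - pr) * q) + min (pr * (1 - p)) ((1 - pr) * (1 - q))

/-- Hellinger-λ affinity for Bernoulli distributions. -/
noncomputable def betaB (l p q : ℝ) : ℝ :=
  p ^ l * q ^ (1 - l) + (1 - p) ^ l * (1 - q) ^ (1 - l)

theorem bernoulli_affinity_upper_bound (pr δ : ℝ)
    (hpr : pr ∈ Set.Ioc (0 : ℝ) (1 / 2)) (hδ : δ ∈ Set.Ioo (0 : ℝ) pr)
    (p q : ℝ) (hp : p ∈ Set.Icc (0 : ℝ) 1) (hq : q ∈ Set.Icc (0 : ℝ) 1)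
    (he : bayesErrB pr p q = δ) :
    betaB (lambdaStar pr δ) p q ≤ 2 * (δ / pr) ^ lambdaStar pr δ := by
  obtain ⟨hpr0, hpr2⟩ := hpr
  obtain ⟨hδ0, hδπ⟩ := hδ
  have h1π0 : (0:ℝ) < 1 - pr := by linarith
  set L := Real.log ((1 - pr) / δ) with hLdef
  set M := Real.log (pr / δ) with hMdef
  have hLpos : 0 < L := Real.log_pos (by rw [lt_div_iff₀ hδ0]; linarith)
  have hMpos : 0 < M := Real.log_pos (by rw [lt_div_iff₀ hδ0]; linarith)
  set l := lambdaStar pr δ with hldef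
  have hleq : l = L / (L + M) := rfl
  have hl0 : 0 < l := by rw [hleq]; positivity
  have hl1 : l < 1 := by
    rw [hleq, div_lt_one (by linarith)]; linarith
  have hratio : (δ / (1 - pr)) ^ (1 - l) = (δ / pr) ^ l := by
    have h1 : (0:ℝ) < δ / (1 - pr) := by positivity
    have h2 : (0:ℝ) < δ / pr := by positivity
    rw [Real.rpow_def_of_pos h1, Real.rpow_def_of_pos h2]
    congr 1
    have e1 : Real.log (δ / (1 - pr)) = -L := by
      rw [hLdef, Real.log_div hδ0.ne' h1π0.ne', Real.log_div h1π0.ne' hδ0.ne']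
      ring
    have e2 : Real.log (δ / pr) = -M := by
      rw [hMdef, Real.log_div hδ0.ne' hpr0.ne', Real.log_div hpr0.ne' hδ0.ne']
      ring
    have hLM : L + M ≠ 0 := by linarith
    rw [e1, e2, hleq]
    field_simp
    ring
  have key : ∀ a b : ℝ, 0 ≤ a → a ≤ 1 → 0 ≤ b → b ≤ 1 →
      min (pr * a) ((1 - pr) * b) ≤ δ → a ^ l * b ^ (1 - l) ≤ (δ / pr) ^ l := by
    intro a b ha0 ha1 hb0 hb1 hmin
    rcases le_total (pr * a) ((1 - pr) * b) with h | h
    · rw [min_eq_left h] at hmin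
      have ha : a ≤ δ / pr := by rw [le_div_iff₀ hpr0]; linarith
      calc a ^ l * b ^ (1 - l) ≤ (δ / pr) ^ l * 1 := by
            apply mul_le_mul (Real.rpow_le_rpow ha0 ha hl0.le)
              (Real.rpow_le_one hb0 hb1 (by linarith)) (by positivity) (by positivity)
        _ = (δ / pr) ^ l := mul_one _
    · rw [min_eq_right h] at hmin
      have hb : b ≤ δ / (1 - pr) := by rw [le_div_iff₀ h1π0]; linarith
      calc a ^ l * b ^ (1 - l) ≤ 1 * (δ / (1 - pr)) ^ (1 - l) := by
            apply mul_le_mul (Real.rpow_le_one ha0 ha1 hl0.le)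
              (Real.rpow_le_rpow hb0 hb (by linarith)) (by positivity) (by norm_num)
        _ = (δ / pr) ^ l := by rw [one_mul, hratio]
  have hn1 : 0 ≤ min (pr * p) ((1 - pr) * q) :=
    le_min (mul_nonneg hpr0.le hp.1) (mul_nonneg h1π0.le hq.1)
  have hn2 : 0 ≤ min (pr * (1 - p)) ((1 - pr) * (1 - q)) :=
    le_min (mul_nonneg hpr0.le (by linarith [hp.2])) (mul_nonneg h1π0.le (by linarith [hq.2]))
  unfold bayesErrB at he
  have hmin1 : min (pr * p) ((1 - pr) * q) ≤ δ := by linarith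
  have hmin2 : min (pr * (1 - p)) ((1 - pr) * (1 - q)) ≤ δ := by linarith
  have t1 := key p q hp.1 hp.2 hq.1 hq.2 hmin1
  have t2 := key (1 - p) (1 - q) (by linarith [hp.2]) (by linarith [hp.1])
    (by linarith [hq.2]) (by linarith [hq.1]) hmin2
  unfold betaB
  linarith
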